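/- For every c ∈ (0,√2), with λ = √(2−c²)/2 and ω = √(2+c²)/2, there exists a unique θ < 0 such that, setting t* = (1/ω)·(3π/2 − arctan((λθ + 1)/(ωθ))), one has e^{2λt*} = θ² + 2λθ + 1. (This unique value is denoted θ_min(c).) -/

import Mathlib

open Real

/-- Auxiliary function: `2·λ·t*(θ) − log R(θ)` where `R(θ) = θ² + 2λθ + 1`. -/
noncomputable def auxh (lam ω : ℝ) (θ : ℝ) : ℝ :=
  2 * lam * ((1 / ω) * (3 * Real.pi / 2 - Real.arctan ((lam * θ + 1) / (ω * θ))))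
    - Real.log (θ ^ 2 + 2 * lam * θ + 1)

lemma auxR_pos (lam ω : ℝ) (hω0 : 0 < ω) (hsum : lam ^ 2 + ω ^ 2 = 1) (θ : ℝ) :
    0 < θ ^ 2 + 2 * lam * θ + 1 := by
  nlinarith [sq_nonneg (θ + lam), sq_nonneg ω]

lemma auxh_deriv (lam ω : ℝ) (hω0 : 0 < ω) (hsum : lam ^ 2 + ω ^ 2 = 1)
    (x : ℝ) (hx : x < 0) :
    HasDerivAt (auxh lam ω) (-2 * x / (x ^ 2 + 2 * lam * x + 1)) x := by
  have hxne : x ≠ 0 := ne_of_lt hx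
  have hωx : ω * x ≠ 0 := mul_ne_zero (ne_of_gt hω0) hxne
  have hRpos : 0 < x ^ 2 + 2 * lam * x + 1 := auxR_pos lam ω hω0 hsum x
  -- derivative of u θ = (lam θ + 1)/(ω θ)
  have hnum : HasDerivAt (fun θ : ℝ => lam * θ + 1) lam x := by
    simpa using ((hasDerivAt_id x).const_mul lam).add_const 1
  have hden : HasDerivAt (fun θ : ℝ => ω * θ) ω x := by
    simpa using ((hasDerivAt_id x).const_mul ω)
  have hu : HasDerivAt (fun θ : ℝ => (lam * θ + 1) / (ω * θ))
      ((lam * (ω * x) - (lam * x + 1) * ω) / (ω * x) ^ 2) x := hnum.div hden hωx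
  have huval : (lam * (ω * x) - (lam * x + 1) * ω) / (ω * x) ^ 2 = -1 / (ω * x ^ 2) := by
    field_simp
    ring
  rw [huval] at hu
  -- derivative of arctan ∘ u
  have harct := (Real.hasDerivAt_arctan ((lam * x + 1) / (ω * x))).comp x hu
  -- 1 + u x ^ 2 = R x / (ω² x²)
  have hkey : 1 + ((lam * x + 1) / (ω * x)) ^ 2
      = (x ^ 2 + 2 * lam * x + 1) / (ω ^ 2 * x ^ 2) := by
    field_simp
    linear_combination x ^ 2 * hsum
  have harct' : HasDerivAt (fun θ : ℝ => Real.arctan ((lam * θ + 1) / (ω * θ)))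
      (1 / (1 + ((lam * x + 1) / (ω * x)) ^ 2) * (-1 / (ω * x ^ 2))) x := harct
  -- derivative of log R
  have hR : HasDerivAt (fun θ : ℝ => θ ^ 2 + 2 * lam * θ + 1) (2 * x + 2 * lam) x := by
    have h1 : HasDerivAt (fun θ : ℝ => θ ^ 2) (2 * x) x := by
      simpa using hasDerivAt_pow 2 x
    simpa using (h1.add (((hasDerivAt_id x).const_mul (2 * lam)))).add_const 1
  have hlog : HasDerivAt (fun θ : ℝ => Real.log (θ ^ 2 + 2 * lam * θ + 1))
      ((2 * x + 2 * lam) / (x ^ 2 + 2 * lam * x + 1)) x := by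
    simpa [div_eq_mul_inv] using hR.log (ne_of_gt hRpos)
  -- assemble
  have hA : HasDerivAt (fun θ : ℝ =>
      2 * lam * ((1 / ω) * (3 * Real.pi / 2 - Real.arctan ((lam * θ + 1) / (ω * θ)))))
      (2 * lam * ((1 / ω) * (0 - (1 / (1 + ((lam * x + 1) / (ω * x)) ^ 2) * (-1 / (ω * x ^ 2)))))) x := by
    exact (((hasDerivAt_const x (3 * Real.pi / 2)).sub harct').const_mul (1 / ω)).const_mul (2 * lam)
  have hfinal := hA.sub hlog
  have hval : 2 * lam * ((1 / ω) * (0 - (1 / (1 + ((lam * x + 1) / (ω * x)) ^ 2) * (-1 / (ω * x ^ 2)))))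
      - (2 * x + 2 * lam) / (x ^ 2 + 2 * lam * x + 1)
      = -2 * x / (x ^ 2 + 2 * lam * x + 1) := by
    rw [hkey, one_div_div]
    field_simp
    ring
  rw [hval] at hfinal
  exact hfinal

theorem stmt5 (c : ℝ) (hc : c ∈ Set.Ioo 0 (Real.sqrt 2))
    (lam ω : ℝ) (hlam : lam = Real.sqrt (2 - c ^ 2) / 2)
    (hω : ω = Real.sqrt (2 + c ^ 2) / 2) :
    ∃! θ : ℝ, θ < 0 ∧
      Real.exp (2 * lam *
          ((1 / ω) * (3 * Real.pi / 2 - Real.arctan ((lam * θ + 1) / (ω * θ))))) =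
        θ ^ 2 + 2 * lam * θ + 1 := by
  obtain ⟨hc0, hc2⟩ := hc
  have h2 : (Real.sqrt 2) ^ 2 = 2 := Real.sq_sqrt (by norm_num)
  have hc2' : c ^ 2 < 2 := by nlinarith [Real.sqrt_nonneg 2]
  have hlam0 : 0 < lam := by
    rw [hlam]
    have : 0 < Real.sqrt (2 - c ^ 2) := Real.sqrt_pos.mpr (by linarith)
    linarith
  have hω0 : 0 < ω := by
    rw [hω]
    have : 0 < Real.sqrt (2 + c ^ 2) := Real.sqrt_pos.mpr (by nlinarith)
    linarith
  have hlamsq : lam ^ 2 = (2 - c ^ 2) / 4 := by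
    rw [hlam, div_pow, Real.sq_sqrt (by linarith)]; norm_num
  have hωsq : ω ^ 2 = (2 + c ^ 2) / 4 := by
    rw [hω, div_pow, Real.sq_sqrt (by nlinarith)]; norm_num
  have hsum : lam ^ 2 + ω ^ 2 = 1 := by rw [hlamsq, hωsq]; ring
  have hlam1 : lam < 1 := by nlinarith
  have hω1 : ω < 1 := by nlinarith
  have hRpos := auxR_pos lam ω hω0 hsum
  -- strict monotone
  have hmono : StrictMonoOn (auxh lam ω) (Set.Iio 0) := by
    apply strictMonoOn_of_deriv_pos (convex_Iio 0)
    · exact fun x hx => (auxh_deriv lam ω hω0 hsum x hx).differentiableAt.continuousAt.continuousWithinAt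
    · intro x hx
      rw [interior_Iio] at hx
      rw [(auxh_deriv lam ω hω0 hsum x hx).deriv]
      apply div_pos (by linarith [hx.out]) (hRpos x)
  -- h(-lam) > 0
  have hpi := Real.pi_pos
  have hpos : 0 < auxh lam ω (-lam) := by
    have harc : Real.arctan ((lam * (-lam) + 1) / (ω * (-lam))) < Real.pi / 2 :=
      Real.arctan_lt_pi_div_two _
    have hA : 2 * Real.pi * lam / ω ≤ 2 * lam * ((1 / ω) *
        (3 * Real.pi / 2 - Real.arctan ((lam * (-lam) + 1) / (ω * (-lam))))) := by
      have h1 : Real.pi ≤ 3 * Real.pi / 2 - Real.arctan ((lam * (-lam) + 1) / (ω * (-lam))) := by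
        linarith
      have h2 : (0:ℝ) ≤ 2 * lam / ω := by positivity
      calc 2 * Real.pi * lam / ω = (2 * lam / ω) * Real.pi := by ring
        _ ≤ (2 * lam / ω) * (3 * Real.pi / 2 - Real.arctan ((lam * (-lam) + 1) / (ω * (-lam)))) :=
            mul_le_mul_of_nonneg_left h1 h2
        _ = 2 * lam * ((1 / ω) * (3 * Real.pi / 2 - Real.arctan ((lam * (-lam) + 1) / (ω * (-lam))))) := by
            ring
    have hRval : (-lam) ^ 2 + 2 * lam * (-lam) + 1 = ω ^ 2 := by nlinarith
    have hlogneg : Real.log ((-lam) ^ 2 + 2 * lam * (-lam) + 1) < 0 := by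
      rw [hRval]
      apply Real.log_neg (by positivity) (by nlinarith)
    have hApos : 0 < 2 * Real.pi * lam / ω := by positivity
    unfold auxh
    linarith
  -- h(θ₀) < 0 where θ₀ = -(M+1), M = exp(4πλ/ω)
  set M : ℝ := Real.exp (4 * Real.pi * lam / ω) with hM
  have hM1 : 1 < M := by
    rw [hM]
    rw [Real.one_lt_exp_iff]
    positivity
  have hθ₀ : -(M + 1) < -lam := by linarith
  have hneg : auxh lam ω (-(M + 1)) < 0 := by
    have harc : -(Real.pi / 2) < Real.arctan ((lam * (-(M + 1)) + 1) / (ω * (-(M + 1)))) :=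
      Real.neg_pi_div_two_lt_arctan _
    have hA : 2 * lam * ((1 / ω) *
        (3 * Real.pi / 2 - Real.arctan ((lam * (-(M + 1)) + 1) / (ω * (-(M + 1))))))
        < 4 * Real.pi * lam / ω := by
      have h1 : 3 * Real.pi / 2 - Real.arctan ((lam * (-(M + 1)) + 1) / (ω * (-(M + 1)))) < 2 * Real.pi := by
        linarith
      have h2 : (0:ℝ) < 2 * lam / ω := by positivity
      calc 2 * lam * ((1 / ω) * (3 * Real.pi / 2 - Real.arctan ((lam * (-(M + 1)) + 1) / (ω * (-(M + 1))))))
          = (2 * lam / ω) * (3 * Real.pi / 2 - Real.arctan ((lam * (-(M + 1)) + 1) / (ω * (-(M + 1))))) := by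
            ring
        _ < (2 * lam / ω) * (2 * Real.pi) := mul_lt_mul_of_pos_left h1 h2
        _ = 4 * Real.pi * lam / ω := by ring
    have hRbig : M ≤ (-(M + 1)) ^ 2 + 2 * lam * (-(M + 1)) + 1 := by nlinarith
    have hlogbig : 4 * Real.pi * lam / ω ≤ Real.log ((-(M + 1)) ^ 2 + 2 * lam * (-(M + 1)) + 1) := by
      calc 4 * Real.pi * lam / ω = Real.log M := (Real.log_exp _).symm
        _ ≤ _ := Real.log_le_log (by linarith) hRbig
    unfold auxh
    linarith
  -- continuity on the interval
  have hsub : Set.Icc (-(M + 1)) (-lam) ⊆ Set.Iio 0 := by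
    intro x hx
    exact lt_of_le_of_lt hx.2 (by linarith)
  have hcont : ContinuousOn (auxh lam ω) (Set.Icc (-(M + 1)) (-lam)) := by
    intro x hx
    exact (auxh_deriv lam ω hω0 hsum x (hsub hx)).differentiableAt.continuousAt.continuousWithinAt
  -- IVT
  have hivt := intermediate_value_Icc (le_of_lt hθ₀) hcont
  have h0mem : (0 : ℝ) ∈ Set.Icc (auxh lam ω (-(M + 1))) (auxh lam ω (-lam)) :=
    ⟨le_of_lt hneg, le_of_lt hpos⟩
  obtain ⟨θ₀, hθmem, hθeq⟩ := hivt h0mem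
  have hθneg : θ₀ < 0 := hsub hθmem
  -- equivalence between the equation and auxh = 0
  have hiff : ∀ θ : ℝ, (Real.exp (2 * lam *
      ((1 / ω) * (3 * Real.pi / 2 - Real.arctan ((lam * θ + 1) / (ω * θ))))) =
        θ ^ 2 + 2 * lam * θ + 1) ↔ auxh lam ω θ = 0 := by
    intro θ
    unfold auxh
    constructor
    · intro he
      rw [← he, Real.log_exp]
      ring
    · intro hz
      have : 2 * lam * ((1 / ω) * (3 * Real.pi / 2 - Real.arctan ((lam * θ + 1) / (ω * θ))))
          = Real.log (θ ^ 2 + 2 * lam * θ + 1) := by linarith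
      rw [this, Real.exp_log (hRpos θ)]
  refine ⟨θ₀, ⟨hθneg, (hiff θ₀).mpr hθeq⟩, ?_⟩
  intro y hy
  have hy0 : auxh lam ω y = 0 := (hiff y).mp hy.2
  exact hmono.injOn hy.1 hθneg (by rw [hy0, hθeq])
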